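/- arXiv:math/0604236 — 3 statements merged into one kernel-verified Lean document; each statement's English description precedes it below -/
import Mathlib

section
/- Let E be a real inner product space, M ⊆ E a subset, k ≥ 2 an integer with indices taken modulo k, and x₁,…,x_k ∈ M with x_i ≠ x_{i+1} for all i ∈ ℤ/k. Suppose (x₁,…,x_k) is a critical point of l_k along curves in M, i.e., for every family of curves γ_i in M through x_i (each differentiable at 0), the function t ↦ ∑_{i∈ℤ/k} ‖γ_i(t) − γ_{i+1}(t)‖ has derivative 0 at 0. Set a_i = (x_i − x_{i+1})/‖x_i − x_{i+1}‖. Then (a₁,…,a_k, x₁,…,x_k) is a critical point of f_k along curves: for every family of curves α_i in the unit sphere of E through a_i and curves γ_i in M through x_i (each differentiable at 0), the function t ↦ ∑_{i∈ℤ/k} ⟪α_i(t), γ_i(t) − γ_{i+1}(t)⟫ has derivative 0 at 0. -/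
open RealInnerProductSpace

private lemma hasDerivAt_norm_comp {E : Type*} [NormedAddCommGroup E] [InnerProductSpace ℝ E]
    {u : ℝ → E} {u' : E} (hu : HasDerivAt u u' 0) (h0 : u 0 ≠ 0) :
    HasDerivAt (fun t => ‖u t‖) (‖u 0‖⁻¹ * ⟪u 0, u'⟫) 0 := by
  have h1 : HasDerivAt (fun t => ⟪u t, u t⟫) (⟪u 0, u'⟫ + ⟪u', u 0⟫) 0 :=
    HasDerivAt.inner ℝ hu hu
  have hsq : (⟪u 0, u 0⟫ : ℝ) ≠ 0 := by
    simpa [real_inner_self_eq_norm_sq, pow_eq_zero_iff] using (norm_ne_zero_iff.mpr h0)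
  have h2 := (Real.hasDerivAt_sqrt hsq).comp 0 h1
  have heq : (fun t => Real.sqrt ⟪u t, u t⟫) = fun t => ‖u t‖ := by
    funext t; rw [real_inner_self_eq_norm_sq, Real.sqrt_sq (norm_nonneg _)]
  rw [Function.comp_def] at h2
  rw [heq] at h2
  refine h2.congr_deriv ?_
  rw [real_inner_self_eq_norm_sq, Real.sqrt_sq (norm_nonneg _),
    real_inner_comm u' (u 0)]
  field_simp
  ring

/-- If `(x₁,…,x_k)` (with `x_i ∈ M`, `x_i ≠ x_{i+1}`) is a critical point of the
perimeter `l_k` along curves in `M`, then with `a_i = (x_i − x_{i+1})/‖x_i − x_{i+1}‖`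
the point `(a₁,…,a_k,x₁,…,x_k)` is a critical point of
`f_k = ∑ ⟪a_i, x_i − x_{i+1}⟫` along curves in the sphere and in `M`. -/
theorem critical_lk_to_critical_fk
    {E : Type*} [NormedAddCommGroup E] [InnerProductSpace ℝ E]
    (M : Set E) (k : ℕ) [NeZero k] (hk : 2 ≤ k)
    (x : ZMod k → E) (hxM : ∀ i, x i ∈ M)
    (hne : ∀ i : ZMod k, x i ≠ x (i + 1))
    (hcrit : ∀ γ : ZMod k → ℝ → E,
      (∀ i t, γ i t ∈ M) → (∀ i, γ i 0 = x i) →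
      (∀ i, DifferentiableAt ℝ (γ i) 0) →
      HasDerivAt (fun t => ∑ i : ZMod k, ‖γ i t - γ (i + 1) t‖) 0 0)
    (a : ZMod k → E)
    (ha : ∀ i, a i = ‖x i - x (i + 1)‖⁻¹ • (x i - x (i + 1))) :
    ∀ (α γ : ZMod k → ℝ → E),
      (∀ i t, ‖α i t‖ = 1) → (∀ i, α i 0 = a i) →
      (∀ i, DifferentiableAt ℝ (α i) 0) →
      (∀ i t, γ i t ∈ M) → (∀ i, γ i 0 = x i) →
      (∀ i, DifferentiableAt ℝ (γ i) 0) →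
      HasDerivAt (fun t => ∑ i : ZMod k, ⟪α i t, γ i t - γ (i + 1) t⟫) 0 0 := by
  intro α γ hα1 hα0 hαd hγM hγ0 hγd
  -- notation: derivatives
  set v : ZMod k → E := fun i => deriv (γ i) 0 with hv
  set b : ZMod k → E := fun i => deriv (α i) 0 with hb
  have hγ' : ∀ i, HasDerivAt (γ i) (v i) 0 := fun i => (hγd i).hasDerivAt
  have hα' : ∀ i, HasDerivAt (α i) (b i) 0 := fun i => (hαd i).hasDerivAt
  have hxne : ∀ i : ZMod k, ‖x i - x (i + 1)‖ ≠ 0 :=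
    fun i => norm_ne_zero_iff.mpr (sub_ne_zero.mpr (hne i))
  -- derivative of each difference
  have hdiff : ∀ i : ZMod k, HasDerivAt (fun t => γ i t - γ (i + 1) t)
      (v i - v (i + 1)) 0 := fun i => (hγ' i).sub (hγ' (i + 1))
  -- Step 1: ∑ ⟪a i, v i - v (i+1)⟫ = 0 via hcrit
  have hsum0 : ∑ i : ZMod k, ⟪a i, v i - v (i + 1)⟫ = 0 := by
    have hnorm : ∀ i : ZMod k, HasDerivAt (fun t => ‖γ i t - γ (i + 1) t‖)
        (⟪a i, v i - v (i + 1)⟫) 0 := by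
      intro i
      have h0 : γ i 0 - γ (i + 1) 0 ≠ 0 := by
        rw [hγ0, hγ0]; exact sub_ne_zero.mpr (hne i)
      have := hasDerivAt_norm_comp (hdiff i) h0
      simp only [hγ0] at this
      convert this using 1
      rw [ha i, real_inner_smul_left]
    have hS : HasDerivAt (fun t => ∑ i : ZMod k, ‖γ i t - γ (i + 1) t‖)
        (∑ i : ZMod k, ⟪a i, v i - v (i + 1)⟫) 0 := HasDerivAt.fun_sum fun i _ => hnorm i
    have h0 := hcrit γ hγM hγ0 hγd
    exact (hS.unique h0)
  -- Step 2: ⟪b i, a i⟫ = 0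
  have hba : ∀ i : ZMod k, ⟪b i, a i⟫ = 0 := by
    intro i
    have h1 : HasDerivAt (fun t => ⟪α i t, α i t⟫)
        (⟪α i 0, b i⟫ + ⟪b i, α i 0⟫) 0 := HasDerivAt.inner ℝ (hα' i) (hα' i)
    have h2 : (fun t => (⟪α i t, α i t⟫ : ℝ)) = fun _ => 1 := by
      funext t; rw [real_inner_self_eq_norm_sq, hα1 i t]; norm_num
    rw [h2] at h1
    have h3 : (⟪α i 0, b i⟫ : ℝ) + ⟪b i, α i 0⟫ = 0 := h1.unique (hasDerivAt_const 0 1)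
    rw [real_inner_comm (α i 0) (b i), hα0 i] at h3
    rw [real_inner_comm]
    linarith
  -- Step 3: combine
  have hterm : ∀ i : ZMod k, HasDerivAt (fun t => ⟪α i t, γ i t - γ (i + 1) t⟫)
      (⟪a i, v i - v (i + 1)⟫) 0 := by
    intro i
    have := HasDerivAt.inner ℝ (hα' i) (hdiff i)
    rw [hα0 i, hγ0, hγ0] at this
    have hz : (⟪b i, x i - x (i + 1)⟫ : ℝ) = 0 := by
      have : x i - x (i + 1) = ‖x i - x (i + 1)‖ • a i := by
        rw [ha i, smul_smul, mul_inv_cancel₀ (hxne i), one_smul]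
      rw [this, real_inner_smul_right, hba i, mul_zero]
    rw [hz, add_zero] at this
    exact this
  have hS : HasDerivAt (fun t => ∑ i : ZMod k, ⟪α i t, γ i t - γ (i + 1) t⟫)
      (∑ i : ZMod k, ⟪a i, v i - v (i + 1)⟫) 0 := HasDerivAt.fun_sum fun i _ => hterm i
  rwa [hsum0] at hS
end

section
/- Let E be a real inner product space, M ⊆ E a subset, k ≥ 2 an integer with indices taken modulo k, x₁,…,x_k ∈ M and a₁,…,a_k ∈ E with ‖a_i‖ = 1. Suppose (a₁,…,a_k,x₁,…,x_k) is a critical point of f_k along curves, i.e., for every family of curves α_i in the unit sphere of E through a_i and curves γ_i in M through x_i (each differentiable at 0), the function t ↦ ∑_{i∈ℤ/k} ⟪α_i(t), γ_i(t) − γ_{i+1}(t)⟫ has derivative 0 at 0. Then for every i ∈ ℤ/k: (1) there exists c_i ∈ ℝ such that x_i − x_{i+1} = c_i • a_i; and (2) for every curve γ in M through x_i differentiable at 0, ⟪a_{i−1} − a_i, γ'(0)⟫ = 0. -/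
open RealInnerProductSpace

/-- At a critical point `(a₁,…,a_k,x₁,…,x_k)` of `f_k` along curves (with
`x_i ∈ M`, `‖a_i‖ = 1`): (1) each chord `x_i − x_{i+1}` is parallel to `a_i`, and
(2) `a_{i−1} − a_i` is perpendicular to every tangent direction of `M` at `x_i`. -/
theorem critical_fk_conditions
    {E : Type*} [NormedAddCommGroup E] [InnerProductSpace ℝ E]
    (M : Set E) (k : ℕ) [NeZero k] (hk : 2 ≤ k)
    (x : ZMod k → E) (hxM : ∀ i, x i ∈ M)
    (a : ZMod k → E) (ha : ∀ i, ‖a i‖ = 1)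
    (hcrit : ∀ (α γ : ZMod k → ℝ → E),
      (∀ i t, ‖α i t‖ = 1) → (∀ i, α i 0 = a i) →
      (∀ i, DifferentiableAt ℝ (α i) 0) →
      (∀ i t, γ i t ∈ M) → (∀ i, γ i 0 = x i) →
      (∀ i, DifferentiableAt ℝ (γ i) 0) →
      HasDerivAt (fun t => ∑ i : ZMod k, ⟪α i t, γ i t - γ (i + 1) t⟫) 0 0) :
    ∀ i : ZMod k,
      (∃ c : ℝ, x i - x (i + 1) = c • a i) ∧
      (∀ (γ : ℝ → E) (v : E), (∀ t, γ t ∈ M) → γ 0 = x i → HasDerivAt γ v 0 →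
        ⟪a (i - 1) - a i, v⟫ = 0) := by
  haveI : Fact (1 < k) := ⟨hk⟩
  intro i
  constructor
  · -- Part 1
    set u := x i - x (i + 1) with hu
    set c := ⟪u, a i⟫ with hc
    set w := u - c • a i with hw
    by_cases hw0 : w = 0
    · exact ⟨c, by rw [← sub_eq_zero]; simpa using hw0⟩
    exfalso
    have haw : ⟪a i, w⟫ = 0 := by
      have : ⟪a i, a i⟫ = 1 := by
        rw [real_inner_self_eq_norm_sq, ha i]; norm_num
      simp [hw, inner_sub_right, inner_smul_right, this, hc, real_inner_comm, ha]
    have hwn : (0:ℝ) < ‖w‖ := norm_pos_iff.mpr hw0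
    -- the sphere curve through a i with velocity w
    set α : ℝ → E := fun t =>
      Real.cos (‖w‖ * t) • a i + (Real.sin (‖w‖ * t) / ‖w‖) • w with hα
    have hαnorm : ∀ t, ‖α t‖ = 1 := by
      intro t
      have hsq : ‖α t‖ ^ 2 = 1 := by
        rw [hα]
        rw [norm_add_sq_real]
        rw [inner_smul_left, inner_smul_right, haw]
        rw [norm_smul, norm_smul, ha i]
        have hws : |Real.sin (‖w‖*t) / ‖w‖| * ‖w‖ = |Real.sin (‖w‖*t)| := by
          rw [abs_div, abs_of_pos hwn, div_mul_cancel₀]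
          exact hwn.ne'
        simp only [Real.norm_eq_abs, mul_one, hws, mul_zero, add_zero]
        rw [sq_abs, sq_abs]
        exact Real.cos_sq_add_sin_sq _
      nlinarith [norm_nonneg (α t), hsq]
    have hα0 : α 0 = a i := by simp [hα]
    have hαd : HasDerivAt α w 0 := by
      have h1 : HasDerivAt (fun t : ℝ => ‖w‖ * t) ‖w‖ 0 := by
        simpa using (hasDerivAt_id (0:ℝ)).const_mul ‖w‖
      have hcos : HasDerivAt (fun t : ℝ => Real.cos (‖w‖ * t))
          (-Real.sin (‖w‖ * 0) * ‖w‖) 0 :=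
        (Real.hasDerivAt_cos (‖w‖ * 0)).comp 0 h1
      have hsin : HasDerivAt (fun t : ℝ => Real.sin (‖w‖ * t) / ‖w‖)
          (Real.cos (‖w‖ * 0) * ‖w‖ / ‖w‖) 0 :=
        ((Real.hasDerivAt_sin (‖w‖ * 0)).comp 0 h1).div_const ‖w‖
      have := (hcos.smul_const (a i)).add (hsin.smul_const w)
      simp only [mul_zero, Real.sin_zero, Real.cos_zero, neg_zero, zero_mul,
        zero_smul, zero_add, one_mul] at this
      rw [div_self hwn.ne', one_smul] at this
      exact this
    set A : ZMod k → ℝ → E := fun j t => if j = i then α t else a j with hA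
    set G : ZMod k → ℝ → E := fun j _ => x j with hG
    set A' : ZMod k → E := fun j => if j = i then w else 0 with hA'
    have hAd : ∀ j, HasDerivAt (A j) (A' j) 0 := by
      intro j
      rcases eq_or_ne j i with hj | hj
      · subst hj; simp only [hA, hA', if_pos rfl]; exact hαd
      · simp only [hA, hA', if_neg hj]; exact hasDerivAt_const _ _
    have key := hcrit A G
      (by intro j t; by_cases hj : j = i <;> simp [hA, hj, hαnorm, ha])
      (by intro j; by_cases hj : j = i <;> simp [hA, hj, hα0])
      (fun j => (hAd j).differentiableAt)
      (fun j t => hxM j) (fun j => rfl)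
      (fun j => (hasDerivAt_const _ _).differentiableAt)
    have hD : HasDerivAt (fun t => ∑ j : ZMod k, ⟪A j t, G j t - G (j+1) t⟫)
        (∑ j : ZMod k, (⟪A j 0, (0:E) - 0⟫ + ⟪A' j, G j 0 - G (j+1) 0⟫)) 0 :=
      HasDerivAt.fun_sum fun j _ =>
        ((hAd j).inner ℝ ((hasDerivAt_const 0 (x j)).sub (hasDerivAt_const 0 (x (j+1)))))
    have hDval : (∑ j : ZMod k, (⟪A j 0, (0:E) - 0⟫ + ⟪A' j, G j 0 - G (j+1) 0⟫))
        = ⟪w, u⟫ := by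
      rw [Finset.sum_congr rfl (fun j _ => by
        simp only [sub_zero, inner_zero_right, zero_add, hG] : ∀ j ∈ Finset.univ,
          (⟪A j 0, (0:E) - 0⟫ + ⟪A' j, G j 0 - G (j+1) 0⟫) = ⟪A' j, x j - x (j+1)⟫)]
      rw [Finset.sum_eq_single i]
      · simp [hA', hu]
      · intro j _ hj; simp [hA', hj]
      · simp
    have hzero : ⟪w, u⟫ = 0 := by
      rw [← hDval]
      exact hD.unique key
    have hueq : u = w + c • a i := by rw [hw]; abel
    have h2 : ⟪w, a i⟫ = 0 := by rw [real_inner_comm]; exact haw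
    have : ⟪w, w⟫ = 0 := by
      rw [hueq, inner_add_right, inner_smul_right, h2] at hzero
      simpa using hzero
    exact hw0 (inner_self_eq_zero.mp this)
  · -- Part 2
    intro γ v hγM hγ0 hγv
    have hne : i - 1 ≠ i := by
      intro h
      have : (1 : ZMod k) = 0 := by
        have := sub_eq_self.mp h
        exact this
      exact one_ne_zero this
    set G : ZMod k → ℝ → E := fun j t => if j = i then γ t else x j with hG
    set d : ZMod k → E := fun j => if j = i then v else 0 with hd
    have hGd : ∀ j, HasDerivAt (G j) (d j) 0 := by
      intro j
      rcases eq_or_ne j i with hj | hj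
      · subst hj; simp only [hG, hd, if_pos rfl]; exact hγv
      · simp only [hG, hd, if_neg hj]; exact hasDerivAt_const _ _
    have hG0 : ∀ j, G j 0 = x j := by
      intro j; by_cases hj : j = i <;> simp [hG, hj, hγ0]
    have key := hcrit (fun j _ => a j) G
      (fun j t => ha j) (fun j => rfl)
      (fun j => (hasDerivAt_const _ _).differentiableAt)
      (by intro j t; by_cases hj : j = i <;> simp [hG, hj, hγM, hxM])
      hG0
      (fun j => (hGd j).differentiableAt)
    have hD : HasDerivAt (fun t => ∑ j : ZMod k, ⟪a j, G j t - G (j+1) t⟫)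
        (∑ j : ZMod k, (⟪a j, d j - d (j+1)⟫ + ⟪(0:E), G j 0 - G (j+1) 0⟫)) 0 :=
      HasDerivAt.fun_sum fun j _ =>
        ((hasDerivAt_const 0 (a j)).inner ℝ ((hGd j).sub (hGd (j+1))))
    have hDval : (∑ j : ZMod k, (⟪a j, d j - d (j+1)⟫ + ⟪(0:E), G j 0 - G (j+1) 0⟫))
        = ⟪a i, v⟫ - ⟪a (i-1), v⟫ := by
      have step : ∀ j ∈ Finset.univ, (⟪a j, d j - d (j+1)⟫ + ⟪(0:E), G j 0 - G (j+1) 0⟫)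
          = ⟪a j, d j⟫ - ⟪a j, d (j+1)⟫ := by
        intro j _; rw [inner_zero_left, add_zero, inner_sub_right]
      rw [Finset.sum_congr rfl step, Finset.sum_sub_distrib]
      congr 1
      · rw [Finset.sum_eq_single i]
        · simp [hd]
        · intro j _ hj; simp [hd, hj]
        · simp
      · rw [Finset.sum_eq_single (i-1)]
        · simp [hd]
        · intro j _ hj
          have : j + 1 ≠ i := fun h => hj (by rw [← h]; ring)
          simp [hd, this]
        · simp
    have hzero : ⟪a i, v⟫ - ⟪a (i-1), v⟫ = 0 := by
      rw [← hDval]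
      exact hD.unique key
    rw [inner_sub_left]
    linarith
end

section
/- Let E be a real inner product space, M ⊆ E a subset, k > 2 an integer with indices taken modulo k, and let (a₁,…,a_k,x₁,…,x_k) with x_i ∈ M and ‖a_i‖ = 1 be a critical point of f_k along curves. Let k' be an integer with 1 < k' < k, let β₁,…,β_{k'} ≥ 1 be integers with β₁ + ⋯ + β_{k'} = k, and set α_i = β₁ + ⋯ + β_i. Assume the x_i coincide in blocks: x_{α_{i−1}+1} = ⋯ = x_{α_i} for each 1 ≤ i ≤ k' (with α₀ = 0), while x_{α_i} ≠ x_{α_i + 1} for 1 ≤ i ≤ k' − 1 and x_{α_{k'}} ≠ x₁. Then the point (a_{α_1}, a_{α_2}, …, a_{α_{k'}}, x_{α_1}, x_{α_2}, …, x_{α_{k'}}) is a critical point of f_{k'} along curves. -/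
open RealInnerProductSpace

/-- Collapse of a critical point of `f_k` with vertices coinciding in `k'`
consecutive blocks `x_{α_{i−1}+1} = ⋯ = x_{α_i}` (where `α_i = β₁ + ⋯ + β_i`,
`α_0 = 0`, `α_{k'} = k`, and consecutive blocks have distinct values): the
point `(a_{α_1},…,a_{α_{k'}}, x_{α_1},…,x_{α_{k'}})` is a critical point of
`f_{k'}` along curves. -/
theorem critical_fk_block_collapse
    {E : Type*} [NormedAddCommGroup E] [InnerProductSpace ℝ E]
    (M : Set E) (k k' : ℕ) [NeZero k] [NeZero k']
    (hk : 2 < k) (hk'1 : 1 < k') (hk'2 : k' < k)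
    (β : ℕ → ℕ) (hβ : ∀ i, 1 ≤ i → i ≤ k' → 1 ≤ β i)
    (A : ℕ → ℕ) (hA0 : A 0 = 0)
    (hAstep : ∀ i, A (i + 1) = A i + β (i + 1))
    (hAk : A k' = k)
    (x : ZMod k → E) (hxM : ∀ i, x i ∈ M)
    (a : ZMod k → E) (ha : ∀ i, ‖a i‖ = 1)
    -- the vertices coincide in blocks:
    (hblock : ∀ i, 1 ≤ i → i ≤ k' → ∀ j, A (i - 1) + 1 ≤ j → j ≤ A i →
      x ((j : ℕ) : ZMod k) = x ((A i : ℕ) : ZMod k))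
    -- consecutive blocks are distinct (for `i = k'` this reads `x_{α_{k'}} ≠ x₁`):
    (hsep : ∀ i, 1 ≤ i → i ≤ k' →
      x ((A i : ℕ) : ZMod k) ≠ x (((A i + 1 : ℕ)) : ZMod k))
    -- `(a₁,…,a_k,x₁,…,x_k)` is a critical point of `f_k` along curves:
    (hcrit : ∀ (α γ : ZMod k → ℝ → E),
      (∀ i t, ‖α i t‖ = 1) → (∀ i, α i 0 = a i) →
      (∀ i, DifferentiableAt ℝ (α i) 0) →
      (∀ i t, γ i t ∈ M) → (∀ i, γ i 0 = x i) →
      (∀ i, DifferentiableAt ℝ (γ i) 0) →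
      HasDerivAt (fun t => ∑ i : ZMod k, ⟪α i t, γ i t - γ (i + 1) t⟫) 0 0)
    -- the collapsed point `(a_{α_1},…,a_{α_{k'}}, x_{α_1},…,x_{α_{k'}})`:
    (b y : ZMod k' → E)
    (hb : ∀ i : ZMod k', b i = a ((A (i.val + 1) : ℕ) : ZMod k))
    (hy : ∀ i : ZMod k', y i = x ((A (i.val + 1) : ℕ) : ZMod k)) :
    -- it is a critical point of `f_{k'}` along curves:
    ∀ (α γ : ZMod k' → ℝ → E),
      (∀ i t, ‖α i t‖ = 1) → (∀ i, α i 0 = b i) →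
      (∀ i, DifferentiableAt ℝ (α i) 0) →
      (∀ i t, γ i t ∈ M) → (∀ i, γ i 0 = y i) →
      (∀ i, DifferentiableAt ℝ (γ i) 0) →
      HasDerivAt (fun t => ∑ i : ZMod k', ⟪α i t, γ i t - γ (i + 1) t⟫) 0 0 := by
  intro α γ hαn hα0 hαd hγM hγ0 hγd
  have hk0 : 0 < k := by omega
  have hk'0 : 0 < k' := by omega
  -- monotonicity facts about `A`
  have hAmono : Monotone A := monotone_nat_of_le_succ (fun i => by rw [hAstep]; omega)
  have hAstrict : ∀ i j, i < j → j ≤ k' → A i < A j := by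
    intro i j hij hj
    have h1 : A i < A (i + 1) := by
      have := hβ (i + 1) (by omega) (by omega)
      rw [hAstep]; omega
    have h2 : A (i + 1) ≤ A j := hAmono (by omega)
    omega
  have hAub : ∀ i, i ≤ k' → A i ≤ k := by
    intro i hi
    have := hAmono hi
    omega
  -- the block index function
  have hex : ∀ n : ℕ, ∃ i, n ≤ A i ∨ k < n := by
    intro n
    rcases le_or_gt n k with h | h
    · exact ⟨k', Or.inl (by omega)⟩
    · exact ⟨0, Or.inr h⟩
  set blk : ℕ → ℕ := fun n => Nat.find (hex n) with hblkdef
  -- facts about the block index for `1 ≤ n ≤ k`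
  have hblk : ∀ n, 1 ≤ n → n ≤ k →
      1 ≤ blk n ∧ blk n ≤ k' ∧ A (blk n - 1) < n ∧ n ≤ A (blk n) := by
    intro n h1 h2
    have hspec : n ≤ A (Nat.find (hex n)) := by
      rcases Nat.find_spec (hex n) with h | h
      · exact h
      · omega
    have hle : Nat.find (hex n) ≤ k' := Nat.find_le (Or.inl (by omega))
    have hpos : 1 ≤ Nat.find (hex n) := by
      by_contra h
      have h0 : Nat.find (hex n) = 0 := by omega
      rw [h0, hA0] at hspec; omega
    have hlow : A (Nat.find (hex n) - 1) < n := by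
      rcases Nat.lt_or_ge (A (Nat.find (hex n) - 1)) n with h | h
      · exact h
      · exact absurd (Or.inl h)
          (Nat.find_min (hex n) (m := Nat.find (hex n) - 1) (by omega))
    exact ⟨hpos, hle, hlow, hspec⟩
  -- characterization of the block index
  have hblk_eq : ∀ n j, j + 1 ≤ k' → A j < n → n ≤ A (j + 1) → blk n = j + 1 := by
    intro n j hj h1 h2
    have hAik : A (j + 1) ≤ k := by
      have := hAmono hj
      omega
    have hle : Nat.find (hex n) ≤ j + 1 := Nat.find_le (Or.inl h2)
    have hspec : n ≤ A (Nat.find (hex n)) := by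
      rcases Nat.find_spec (hex n) with h | h
      · exact h
      · omega
    show Nat.find (hex n) = j + 1
    by_contra hne
    have hlt : Nat.find (hex n) ≤ j := by omega
    have := hAmono hlt
    omega
  -- the representative of `j : ZMod k` in `{1, …, k}`
  set r : ZMod k → ℕ := fun j => if j.val = 0 then k else j.val with hrdef
  have hr_bounds : ∀ j : ZMod k, 1 ≤ r j ∧ r j ≤ k := by
    intro j
    have := ZMod.val_lt j
    simp only [hrdef]
    split <;> omega
  have hr_cast : ∀ j : ZMod k, ((r j : ℕ) : ZMod k) = j := by
    intro j
    simp only [hrdef]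
    split
    · rename_i h
      rw [ZMod.natCast_self]
      exact ((ZMod.val_eq_zero j).mp h).symm
    · exact ZMod.natCast_zmod_val j
  have hr_natCast : ∀ m : ℕ, 1 ≤ m → m ≤ k → r ((m : ℕ) : ZMod k) = m := by
    intro m h1 h2
    have hv : ((m : ℕ) : ZMod k).val = m % k := ZMod.val_natCast k m
    simp only [hrdef]
    rcases eq_or_lt_of_le h2 with h | h
    · subst h
      simp [hv, Nat.mod_self]
    · rw [hv, Nat.mod_eq_of_lt h]
      split <;> omega
  -- the collapsed block map and the lifted curves
  set B : ZMod k → ZMod k' := fun j => ((blk (r j) - 1 : ℕ) : ZMod k') with hBdef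
  set Al : ZMod k → ℝ → E :=
    fun j => if r j = A (blk (r j)) then α (B j) else fun _ => a j with hAldef
  set Γ : ZMod k → ℝ → E := fun j => γ (B j) with hΓdef
  -- value of `B j` as a natural number
  have hBval : ∀ j : ZMod k, (B j).val = blk (r j) - 1 := by
    intro j
    obtain ⟨h1, h2⟩ := hr_bounds j
    obtain ⟨hb1, hb2, _, _⟩ := hblk (r j) h1 h2
    simp only [hBdef]
    exact ZMod.val_natCast_of_lt (by omega)
  -- the embedding of `ZMod k'` into `ZMod k` at block tops
  set e : ZMod k' → ZMod k := fun i => ((A (i.val + 1) : ℕ) : ZMod k) with hedef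
  have hival : ∀ i : ZMod k', i.val < k' := fun i => ZMod.val_lt i
  have hre : ∀ i : ZMod k', r (e i) = A (i.val + 1) := by
    intro i
    have h1 : 1 ≤ A (i.val + 1) := by
      have := hAstrict 0 (i.val + 1) (by omega) (by have := hival i; omega)
      omega
    exact hr_natCast _ h1 (hAub _ (by have := hival i; omega))
  have hblk_e : ∀ i : ZMod k', blk (r (e i)) = i.val + 1 := by
    intro i
    rw [hre i]
    exact hblk_eq _ i.val (by have := hival i; omega)
      (hAstrict i.val (i.val + 1) (by omega) (by have := hival i; omega)) le_rfl
  have hBe : ∀ i : ZMod k', B (e i) = i := by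
    intro i
    simp only [hBdef]
    rw [hblk_e i]
    simpa using ZMod.natCast_zmod_val i
  have htop_e : ∀ i : ZMod k', r (e i) = A (blk (r (e i))) := by
    intro i
    rw [hblk_e i, hre i]
  -- successor behaviour of `B` at a block top
  have hBsucc_e : ∀ i : ZMod k', B (e i + 1) = i + 1 := by
    intro i
    have hiv := hival i
    rcases Nat.lt_or_ge (i.val + 1) k' with hlt | hge
    · -- i.val + 1 < k' : interior top
      have hAlt : A (i.val + 1) < k := by
        have := hAstrict (i.val + 1) k' hlt le_rfl
        omega
      have hA1 : 1 ≤ A (i.val + 1) := by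
        have := hAstrict 0 (i.val + 1) (by omega) (by omega)
        omega
      have hsucc : e i + 1 = ((A (i.val + 1) + 1 : ℕ) : ZMod k) := by
        simp only [hedef]
        push_cast
        ring
      have hrs : r (e i + 1) = A (i.val + 1) + 1 := by
        rw [hsucc]
        exact hr_natCast _ (by omega) (by omega)
      have hblks : blk (r (e i + 1)) = i.val + 2 := by
        rw [hrs]
        have h2 : A (i.val + 1) + 1 ≤ A (i.val + 1 + 1) :=
          hAstrict (i.val + 1) (i.val + 1 + 1) (by omega) (by omega)
        have h := hblk_eq _ (i.val + 1) (by omega) (by omega) h2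
        omega
      simp only [hBdef]
      rw [hblks]
      have h21 : i.val + 2 - 1 = i.val + 1 := by omega
      rw [h21]
      push_cast
      rw [ZMod.natCast_zmod_val i]
    · -- i.val + 1 = k' : wrap-around top
      have heq : i.val + 1 = k' := by omega
      have hAeq : A (i.val + 1) = k := by rw [heq, hAk]
      have hsucc : e i + 1 = ((1 : ℕ) : ZMod k) := by
        simp only [hedef, hAeq]
        rw [ZMod.natCast_self]
        norm_num
      have hrs : r (e i + 1) = 1 := by
        rw [hsucc]
        exact hr_natCast 1 le_rfl (by omega)
      have hblks : blk (r (e i + 1)) = 1 := by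
        rw [hrs]
        have h2 : (1 : ℕ) ≤ A (0 + 1) := by
          have := hAstrict 0 1 (by omega) (by omega)
          simpa using by omega
        exact hblk_eq 1 0 (by omega) (by omega) h2
      simp only [hBdef]
      rw [hblks]
      have hi1 : i + 1 = 0 := by
        have h : ((i.val + 1 : ℕ) : ZMod k') = ((k' : ℕ) : ZMod k') := by rw [heq]
        rw [ZMod.natCast_self] at h
        rw [← h]
        push_cast
        rw [ZMod.natCast_zmod_val i]
      rw [hi1]
      norm_num
  -- `e` is injective
  have he_inj : Function.Injective e := by
    intro i i' h
    have h1 : r (e i) = r (e i') := by rw [h]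
    rw [hre i, hre i'] at h1
    have : i.val = i'.val := by
      by_contra hne
      rcases Nat.lt_or_ge i.val i'.val with hlt | hge
      · have := hAstrict (i.val + 1) (i'.val + 1) (by omega) (by have := hival i'; omega)
        omega
      · have hlt : i'.val < i.val := by omega
        have := hAstrict (i'.val + 1) (i.val + 1) (by omega) (by have := hival i; omega)
        omega
    exact ZMod.val_injective _ this
  -- every block top is in the image of `e`
  have htop_mem : ∀ j : ZMod k, r j = A (blk (r j)) → ∃ i : ZMod k', e i = j := by
    intro j hj
    obtain ⟨h1, h2⟩ := hr_bounds j
    obtain ⟨hb1, hb2, _, _⟩ := hblk (r j) h1 h2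
    refine ⟨((blk (r j) - 1 : ℕ) : ZMod k'), ?_⟩
    have hv : (((blk (r j) - 1 : ℕ) : ZMod k')).val = blk (r j) - 1 :=
      ZMod.val_natCast_of_lt (by omega)
    simp only [hedef, hv]
    have : blk (r j) - 1 + 1 = blk (r j) := by omega
    rw [this, ← hj]
    exact hr_cast j
  -- if `j` is not a block top then `B (j + 1) = B j`
  have hBsucc_int : ∀ j : ZMod k, r j ≠ A (blk (r j)) → B (j + 1) = B j := by
    intro j hj
    obtain ⟨h1, h2⟩ := hr_bounds j
    obtain ⟨hb1, hb2, hlow, hhigh⟩ := hblk (r j) h1 h2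
    have hlt : r j < A (blk (r j)) := lt_of_le_of_ne hhigh hj
    have hrk : r j < k := by
      have := hAub (blk (r j)) hb2
      omega
    have hsucc : j + 1 = ((r j + 1 : ℕ) : ZMod k) := by
      conv_lhs => rw [← hr_cast j]
      push_cast
      ring
    have hrs : r (j + 1) = r j + 1 := by
      rw [hsucc]
      exact hr_natCast _ (by omega) (by omega)
    have hblks : blk (r (j + 1)) = blk (r j) := by
      rw [hrs]
      have hstep : blk (r j) - 1 + 1 = blk (r j) := by omega
      have h := hblk_eq (r j + 1) (blk (r j) - 1) (by omega)
        (by omega) (by rw [hstep]; omega)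
      omega
    simp only [hBdef]
    rw [hblks]
  -- hypotheses of `hcrit` for the lifted curves
  have hAln : ∀ j t, ‖Al j t‖ = 1 := by
    intro j t
    simp only [hAldef]
    split
    · exact hαn _ t
    · exact ha j
  have hAl0 : ∀ j, Al j 0 = a j := by
    intro j
    simp only [hAldef]
    split
    · rename_i h
      rw [hα0, hb, hBval j]
      obtain ⟨h1, h2⟩ := hr_bounds j
      obtain ⟨hb1, _, _, _⟩ := hblk (r j) h1 h2
      have : blk (r j) - 1 + 1 = blk (r j) := by omega
      rw [this, ← h, hr_cast j]
    · rfl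
  have hAld : ∀ j, DifferentiableAt ℝ (Al j) 0 := by
    intro j
    simp only [hAldef]
    split
    · exact hαd _
    · exact differentiableAt_const _
  have hΓM : ∀ j t, Γ j t ∈ M := fun j t => hγM _ t
  have hΓ0 : ∀ j, Γ j 0 = x j := by
    intro j
    simp only [hΓdef]
    rw [hγ0, hy, hBval j]
    obtain ⟨h1, h2⟩ := hr_bounds j
    obtain ⟨hb1, hb2, hlow, hhigh⟩ := hblk (r j) h1 h2
    have hstep : blk (r j) - 1 + 1 = blk (r j) := by omega
    rw [hstep]
    have := hblock (blk (r j)) hb1 hb2 (r j) (by omega) hhigh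
    rw [hr_cast j] at this
    exact this.symm
  have hΓd : ∀ j, DifferentiableAt ℝ (Γ j) 0 := fun j => hγd _
  -- apply criticality of `f_k`
  have hder := hcrit Al Γ hAln hAl0 hAld hΓM hΓ0 hΓd
  -- the lifted sum coincides with the collapsed sum
  have hsum : ∀ t, (∑ j : ZMod k, ⟪Al j t, Γ j t - Γ (j + 1) t⟫) =
      ∑ i : ZMod k', ⟪α i t, γ i t - γ (i + 1) t⟫ := by
    intro t
    have h1 : (∑ j : ZMod k, ⟪Al j t, Γ j t - Γ (j + 1) t⟫) =
        ∑ j ∈ Finset.univ.image e, ⟪Al j t, Γ j t - Γ (j + 1) t⟫ := by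
      symm
      apply Finset.sum_subset (Finset.subset_univ _)
      intro j _ hj
      have hnt : r j ≠ A (blk (r j)) := by
        intro h
        obtain ⟨i, hi⟩ := htop_mem j h
        exact hj (Finset.mem_image.mpr ⟨i, Finset.mem_univ i, hi⟩)
      have hz : Γ (j + 1) = Γ j := by
        simp only [hΓdef]
        rw [hBsucc_int j hnt]
      rw [hz, sub_self, inner_zero_right]
    rw [h1, Finset.sum_image (fun i _ i' _ h => he_inj h)]
    apply Finset.sum_congr rfl
    intro i _
    have hAle : Al (e i) = α i := by
      simp only [hAldef]
      rw [if_pos (htop_e i), hBe i]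
    have hΓe : Γ (e i) = γ i := by
      simp only [hΓdef]
      rw [hBe i]
    have hΓe1 : Γ (e i + 1) = γ (i + 1) := by
      simp only [hΓdef]
      rw [hBsucc_e i]
    rw [hAle, hΓe, hΓe1]
  have hfun : (fun t => ∑ j : ZMod k, ⟪Al j t, Γ j t - Γ (j + 1) t⟫) =
      fun t => ∑ i : ZMod k', ⟪α i t, γ i t - γ (i + 1) t⟫ := funext hsum
  rw [hfun] at hder
  exact hder
end
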